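/- For f locally absolutely continuous on (a,b) with f, α_{s_a}f ∈ L²((a,b);dx) where α_{s_a}f = f' - (s_a+1/2)(x-a)^{-1} f and s_a ∈ (-∞,-1], the limit F := lim_{c→a⁺} (c-a)^{-s_a-1/2} f(c) exists, F = 0, and lim_{x→a⁺} f(x)/(x-a)^{1/2} = 0. -/

import Mathlib

open MeasureTheory Set Filter

/-- For `s_a ≤ -1` and `f` locally absolutely continuous on `(a,b)` with
`f, α_{s_a} f ∈ L²`, the limit `F = lim_{c→a⁺} (c-a)^{-s_a-1/2} f(c)` exists,
equals `0`, and `f(x)/(x-a)^{1/2} → 0` as `x → a⁺`. -/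
theorem stmt6 (a b s : ℝ) (hab : a < b) (hs : s ≤ -1)
    (f f' : ℝ → ℂ)
    (hderiv : ∀ x ∈ Ioo a b, HasDerivAt f (f' x) x)
    (hfL2 : IntegrableOn (fun x => ‖f x‖ ^ 2) (Ioo a b))
    (hαL2 : IntegrableOn
      (fun x => ‖f' x - (((s + 1/2) / (x - a) : ℝ) : ℂ) * f x‖ ^ 2) (Ioo a b)) :
    Tendsto (fun c => (((c - a) ^ (-s - 1/2 : ℝ) : ℝ) : ℂ) * f c)
      (nhdsWithin a (Ioi a)) (nhds 0) ∧
    Tendsto (fun x => f x / (((x - a) ^ ((1 : ℝ)/2) : ℝ) : ℂ))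
      (nhdsWithin a (Ioi a)) (nhds 0) := by
  set p : ℝ := -s - 1/2 with hp_def
  have hp1 : (1:ℝ)/2 ≤ p := by rw [hp_def]; linarith
  have hp0 : (0:ℝ) < p := by rw [hp_def]; linarith
  set g : ℝ → ℂ := fun x => f' x - (((s + 1/2) / (x - a) : ℝ) : ℂ) * f x with hg_def
  set w : ℝ → ℝ := fun t => (t - a) ^ p with hw_def
  have hw_cont : Continuous w :=
    (continuous_id.sub continuous_const).rpow_const (fun x => Or.inr hp0.le)
  have hw_nonneg : ∀ t, a ≤ t → 0 ≤ w t := fun t ht =>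
    Real.rpow_nonneg (by linarith) _
  set h : ℝ → ℂ := fun x => (w x : ℂ) * f x with hh_def
  -- continuity and measurability of f and g on (a,b)
  have hf_cont : ContinuousOn f (Ioo a b) := fun x hx =>
    ((hderiv x hx).continuousAt).continuousWithinAt
  have hf_meas : AEStronglyMeasurable f (volume.restrict (Ioo a b)) :=
    hf_cont.aestronglyMeasurable measurableSet_Ioo
  have hg_meas : AEStronglyMeasurable g (volume.restrict (Ioo a b)) := by
    have h2 : AEStronglyMeasurable
        (fun x => deriv f x - (((s + 1/2) / (x - a) : ℝ) : ℂ) * f x)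
        (volume.restrict (Ioo a b)) := by
      refine ((stronglyMeasurable_deriv f).aestronglyMeasurable).sub ?_
      exact ((Complex.measurable_ofReal.comp
        (measurable_const.div (measurable_id.sub measurable_const))).aestronglyMeasurable).mul
        hf_meas
    refine h2.congr ?_
    rw [EventuallyEq, ae_restrict_iff' measurableSet_Ioo]
    refine Eventually.of_forall (fun x hx => ?_)
    simp [hg_def, (hderiv x hx).deriv]
  have hg2_int : IntegrableOn (fun x => ‖g x‖ ^ 2) (Ioo a b) := hαL2
  -- integrability of g on compact subintervals
  have hg_int : ∀ ⦃c d : ℝ⦄, a < c → d < b → IntegrableOn g (Ioc c d) := by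
    intro c d hc hd
    have hsub : Ioc c d ⊆ Ioo a b := fun t ht => ⟨hc.trans ht.1, lt_of_le_of_lt ht.2 hd⟩
    have hmeas : AEStronglyMeasurable g (volume.restrict (Ioc c d)) :=
      hg_meas.mono_measure (Measure.restrict_mono hsub le_rfl)
    refine Integrable.mono' (((integrableOn_const (C := (1:ℝ)) (s := Ioc c d) (μ := volume) measure_Ioc_lt_top.ne)).add
      (hg2_int.mono_set hsub)) hmeas ?_
    refine Eventually.of_forall (fun t => ?_)
    simp only [Pi.add_apply]
    nlinarith [sq_nonneg (‖g t‖ - 1), norm_nonneg (g t)]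
  -- derivative of h
  have hh_deriv : ∀ t ∈ Ioo a b, HasDerivAt h ((w t : ℂ) * g t) t := by
    intro t ht
    have ht0 : (0:ℝ) < t - a := sub_pos.2 ht.1
    have hwd : HasDerivAt w (p * (t - a) ^ (p - 1)) t := by
      have h1 := (Real.hasDerivAt_rpow_const (x := t - a) (p := p) (Or.inl ht0.ne'))
      have h2 : HasDerivAt (fun u : ℝ => u - a) 1 t := (hasDerivAt_id t).sub_const a
      have h3 := h1.comp t h2; rw [mul_one] at h3; exact h3
    have hwc : HasDerivAt (fun u => ((w u : ℝ) : ℂ)) ((p * (t - a) ^ (p - 1) : ℝ) : ℂ) t :=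
      hwd.ofReal_comp
    have hprod := hwc.mul (hderiv t ht)
    have heq : ((p * (t - a) ^ (p - 1) : ℝ) : ℂ) * f t + (w t : ℂ) * f' t
        = (w t : ℂ) * g t := by
      have hw' : p * (t - a) ^ (p - 1) = -((s + 1/2) / (t - a)) * w t := by
        rw [hw_def]
        simp only
        rw [Real.rpow_sub ht0, Real.rpow_one, hp_def]
        ring
      rw [hw', hg_def]
      push_cast
      ring
    rw [← heq]
    exact hprod
  -- FTC
  have key : ∀ ⦃c x : ℝ⦄, a < c → c ≤ x → x < b →
      h x - h c = ∫ t in c..x, (w t : ℂ) * g t := by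
    intro c x hc hcx hx
    refine (intervalIntegral.integral_eq_sub_of_hasDerivAt (fun t ht => ?_) ?_).symm
    · rw [uIcc_of_le hcx] at ht
      exact hh_deriv t ⟨hc.trans_le ht.1, lt_of_le_of_lt ht.2 hx⟩
    · rw [intervalIntegrable_iff, uIoc_of_le hcx]
      refine Integrable.bdd_mul (c := w x) (hg_int hc hx)
        ((Complex.continuous_ofReal.comp hw_cont).aestronglyMeasurable) ?_
      rw [ae_restrict_iff' measurableSet_Ioc]
      refine Eventually.of_forall (fun t ht => ?_)
      rw [Complex.norm_real, Real.norm_of_nonneg (hw_nonneg t (by linarith [ht.1]))]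
      exact Real.rpow_le_rpow (by linarith [ht.1]) (by linarith [ht.2]) hp0.le
  -- global integrable majorant for ‖g‖²
  set G : ℝ → ℝ := (Ioo a b).indicator (fun t => ‖g t‖ ^ 2) with hG_def
  have hG_int : Integrable G := (integrable_indicator_iff measurableSet_Ioo).2 hg2_int
  have hG_nonneg : ∀ t, 0 ≤ G t := fun t =>
    Set.indicator_nonneg (fun x _ => by positivity) t
  set E : ℝ → ℝ := fun x => ∫ t in Ioc a x, G t with hE_def
  have hE_nonneg : ∀ x, 0 ≤ E x := fun x =>
    setIntegral_nonneg measurableSet_Ioc (fun t _ => hG_nonneg t)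
  have hE_bound : ∀ ⦃c x : ℝ⦄, a < c → c ≤ x → x < b →
      (∫ t in Ioc c x, ‖g t‖ ^ 2) ≤ E x := by
    intro c x hc hcx hx
    have hsub : Ioc c x ⊆ Ioo a b := fun t ht => ⟨hc.trans ht.1, lt_of_le_of_lt ht.2 hx⟩
    have h1 : (∫ t in Ioc c x, ‖g t‖ ^ 2) = ∫ t in Ioc c x, G t := by
      refine setIntegral_congr_fun measurableSet_Ioc (fun t ht => ?_)
      rw [hG_def, Set.indicator_of_mem (hsub ht)]
    rw [h1, hE_def]
    refine setIntegral_mono_set hG_int.integrableOn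
      (Eventually.of_forall (fun t => hG_nonneg t))
      (HasSubset.Subset.eventuallyLE (Ioc_subset_Ioc_left hc.le))
  have hE_lim : Tendsto E (nhdsWithin a (Ioi a)) (nhds 0) := by
    rw [hE_def]
    refine hG_int.tendsto_setIntegral_nhds_zero (s := fun x => Ioc a x) ?_
    have h1 : Tendsto (fun x : ℝ => x - a) (nhdsWithin a (Ioi a)) (nhds 0) := by
      have := ((continuous_id.sub (continuous_const (y := a))).tendsto a).mono_left
        (nhdsWithin_le_nhds (s := Ioi a))
      rw [show (0:ℝ) = a - a by ring]; exact this
    have h2 : Tendsto (fun x : ℝ => ENNReal.ofReal (x - a))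
        (nhdsWithin a (Ioi a)) (nhds 0) := by
      have h3 := (ENNReal.continuous_ofReal.tendsto 0).comp h1; rw [ENNReal.ofReal_zero] at h3; exact h3
    refine h2.congr (fun x => ?_)
    simp [Function.comp, Real.volume_Ioc]
  -- the weight squared integral
  have hw_sq_int : ∀ ⦃x : ℝ⦄, a < x →
      (∫ t in Ioc a x, (w t) ^ 2) = (x - a) ^ (2*p + 1) / (2*p + 1) := by
    intro x hx
    have h1 : (∫ t in Ioc a x, (w t) ^ 2) = ∫ t in a..x, ((t - a) ^ (2*p) : ℝ) := by
      rw [intervalIntegral.integral_of_le hx.le]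
      refine setIntegral_congr_fun measurableSet_Ioc (fun t ht => ?_)
      have ht0 : (0:ℝ) ≤ t - a := by linarith [ht.1]
      rw [hw_def]
      simp only
      rw [← Real.rpow_natCast ((t - a) ^ p) 2, ← Real.rpow_mul ht0]
      congr 1
      push_cast
      ring
    rw [h1]
    have h2 := intervalIntegral.integral_comp_sub_right (fun u : ℝ => u ^ (2*p)) a
      (a := a) (b := x)
    rw [h2, sub_self]
    rw [integral_rpow (Or.inl (by linarith))]
    rw [Real.zero_rpow (by linarith)]
    ring_nf
  have hw2_cont : Continuous (fun t => (w t) ^ 2) := hw_cont.pow 2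
  -- Cauchy-Schwarz
  have CS : ∀ ⦃c x : ℝ⦄, a < c → c ≤ x → x < b →
      ‖∫ t in c..x, (w t : ℂ) * g t‖ ≤
        Real.sqrt (∫ t in Ioc c x, (w t) ^ 2) * Real.sqrt (∫ t in Ioc c x, ‖g t‖ ^ 2) := by
    intro c x hc hcx hx
    have h1 : ‖∫ t in c..x, (w t : ℂ) * g t‖ ≤ ∫ t in Ioc c x, w t * ‖g t‖ := by
      refine le_trans (intervalIntegral.norm_integral_le_integral_norm hcx) ?_
      rw [intervalIntegral.integral_of_le hcx]
      refine le_of_eq (setIntegral_congr_fun measurableSet_Ioc (fun t ht => ?_))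
      rw [norm_mul, Complex.norm_real, Real.norm_of_nonneg (hw_nonneg t (by linarith [ht.1]))]
    refine h1.trans ?_
    have hconj : Real.HolderConjugate 2 2 := Real.HolderConjugate.two_two
    have hwm : MemLp w 2 (volume.restrict (Ioc c x)) := by
      refine (memLp_two_iff_integrable_sq hw_cont.aestronglyMeasurable.restrict).2 ?_
      exact hw2_cont.integrableOn_Ioc
    have hsub : Ioc c x ⊆ Ioo a b := fun t ht => ⟨hc.trans ht.1, lt_of_le_of_lt ht.2 hx⟩
    have hgm : MemLp (fun t => ‖g t‖) 2 (volume.restrict (Ioc c x)) := by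
      refine (memLp_two_iff_integrable_sq
        ((hg_meas.mono_measure (Measure.restrict_mono hsub le_rfl)).norm)).2 ?_
      exact hg2_int.mono_set hsub
    have hnn : 0 ≤ᵐ[volume.restrict (Ioc c x)] w := by
      rw [EventuallyLE, ae_restrict_iff' measurableSet_Ioc]
      exact Eventually.of_forall (fun t ht => hw_nonneg t (by linarith [ht.1]))
    have hH := integral_mul_le_Lp_mul_Lq_of_nonneg (μ := volume.restrict (Ioc c x)) hconj
      hnn (Eventually.of_forall (fun t => norm_nonneg (g t)))
      (by simpa using hwm) (by simpa using hgm)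
    refine hH.trans (le_of_eq ?_)
    rw [Real.sqrt_eq_rpow, Real.sqrt_eq_rpow]
    congr 2 <;>
      refine setIntegral_congr_fun measurableSet_Ioc (fun t _ => ?_) <;>
      rw [show ((2:ℝ)) = ((2:ℕ):ℝ) by norm_num, Real.rpow_natCast]
  -- liminf of ‖h‖ at a is 0
  have hlim_inf : ∀ δ : ℝ, 0 < δ → ∀ x ∈ Ioo a b, ∃ c ∈ Ioo a x, ‖h c‖ < δ := by
    intro δ hδ x hx
    by_contra hcon
    push_neg at hcon
    have hxa : (0:ℝ) < x - a := sub_pos.2 hx.1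
    have hnint : ¬ IntegrableOn (fun c => (c - a) ^ (-(2*p)) : ℝ → ℝ) (Ioo a x) := by
      intro hI
      have h2 : IntegrableOn (fun u : ℝ => u ^ (-(2*p))) (Ioo 0 (x - a)) := by
        have hpre : (fun u : ℝ => u + a) ⁻¹' (Ioo a x) = Ioo 0 (x - a) := by
          ext u
          simp only [mem_preimage, mem_Ioo]
          constructor <;> intro hu <;> exact ⟨by linarith [hu.1], by linarith [hu.2]⟩
        have h3 := ((measurePreserving_add_right volume a).integrableOn_comp_preimage
          (measurableEmbedding_addRight a)).2 hI
        rw [hpre] at h3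
        refine h3.congr_fun (fun u hu => ?_) measurableSet_Ioo
        simp [Function.comp]
      rw [intervalIntegral.integrableOn_Ioo_rpow_iff hxa] at h2
      rw [hp_def] at h2
      linarith
    refine hnint ?_
    have hmaj : IntegrableOn (fun c => (δ⁻¹)^2 * ‖f c‖ ^ 2) (Ioo a x) :=
      (hfL2.mono_set (Ioo_subset_Ioo_right hx.2.le)).const_mul _
    refine Integrable.mono' hmaj ?_ ?_
    · refine ContinuousOn.aestronglyMeasurable ?_ measurableSet_Ioo
      intro c hc
      refine (ContinuousAt.continuousWithinAt ?_)
      exact ((continuous_id.sub continuous_const).continuousAt).rpow_const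
        (Or.inl (sub_ne_zero.2 (ne_of_gt hc.1)))
    · rw [ae_restrict_iff' measurableSet_Ioo]
      refine Eventually.of_forall (fun c hc => ?_)
      have hca : (0:ℝ) < c - a := sub_pos.2 hc.1
      have hhc := hcon c hc
      have hnorm : ‖h c‖ = w c * ‖f c‖ := by
        rw [hh_def]
        simp only [norm_mul, Complex.norm_real]
        rw [Real.norm_of_nonneg (hw_nonneg c (by linarith))]
      rw [hnorm] at hhc
      have hw2 : (w c) ^ 2 = (c - a) ^ (2*p) := by
        rw [hw_def]
        simp only
        rw [← Real.rpow_natCast ((c - a) ^ p) 2, ← Real.rpow_mul hca.le]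
        congr 1
        push_cast
        ring
      have hA : (0:ℝ) < (c - a) ^ (2*p) := Real.rpow_pos_of_pos hca _
      have hδ2 : δ ^ 2 ≤ (c - a) ^ (2*p) * ‖f c‖ ^ 2 := by
        rw [← hw2, ← mul_pow]
        exact pow_le_pow_left₀ hδ.le hhc 2
      rw [Real.norm_of_nonneg (Real.rpow_nonneg hca.le _)]
      rw [Real.rpow_neg hca.le]
      calc ((c - a) ^ (2*p))⁻¹
          = (((c - a) ^ (2*p))⁻¹ * δ⁻¹ ^ 2) * δ ^ 2 := by field_simp
        _ ≤ (((c - a) ^ (2*p))⁻¹ * δ⁻¹ ^ 2) * ((c - a) ^ (2*p) * ‖f c‖ ^ 2) := by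
            refine mul_le_mul_of_nonneg_left hδ2 (by positivity)
        _ = δ⁻¹ ^ 2 * ‖f c‖ ^ 2 * (((c - a) ^ (2*p))⁻¹ * ((c - a) ^ (2*p))) := by ring
        _ = δ⁻¹ ^ 2 * ‖f c‖ ^ 2 := by rw [inv_mul_cancel₀ hA.ne']; ring
  -- main pointwise bound on h
  have hbound : ∀ x ∈ Ioo a b,
      ‖h x‖ ≤ Real.sqrt ((x - a) ^ (2*p + 1) / (2*p + 1)) * Real.sqrt (E x) := by
    intro x hx
    refine le_of_forall_pos_le_add (fun δ hδ => ?_)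
    obtain ⟨c, hc, hhc⟩ := hlim_inf δ hδ x hx
    have hk := key hc.1 hc.2.le hx.2
    have h1 : ‖h x‖ ≤ ‖h x - h c‖ + ‖h c‖ := by
      calc ‖h x‖ = ‖(h x - h c) + h c‖ := by congr 1; ring
        _ ≤ ‖h x - h c‖ + ‖h c‖ := norm_add_le _ _
    refine h1.trans ?_
    have h2 : ‖h x - h c‖ ≤ Real.sqrt ((x - a) ^ (2*p + 1) / (2*p + 1)) * Real.sqrt (E x) := by
      rw [hk]
      refine (CS hc.1 hc.2.le hx.2).trans ?_
      refine mul_le_mul (Real.sqrt_le_sqrt ?_)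
        (Real.sqrt_le_sqrt (hE_bound hc.1 hc.2.le hx.2))
        (Real.sqrt_nonneg _) (Real.sqrt_nonneg _)
      rw [← hw_sq_int (hc.1.trans hc.2)]
      refine setIntegral_mono_set hw2_cont.integrableOn_Ioc
        (Eventually.of_forall (fun t => sq_nonneg _))
        (HasSubset.Subset.eventuallyLE (Ioc_subset_Ioc_left hc.1.le))
    linarith
  -- bound for f / (x-a)^{1/2}
  have hfb : ∀ x ∈ Ioo a b, ‖f x / (((x - a) ^ ((1 : ℝ)/2) : ℝ) : ℂ)‖ ≤
      Real.sqrt (1 / (2*p + 1)) * Real.sqrt (E x) := by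
    intro x hx
    have hxa : (0:ℝ) < x - a := sub_pos.2 hx.1
    have e1 : (x - a) ^ (2*p + 1) = ((x - a) ^ (p + 1/2)) ^ 2 := by
      rw [← Real.rpow_natCast ((x - a) ^ (p + 1/2)) 2, ← Real.rpow_mul hxa.le]
      congr 1
      push_cast
      ring
    have hD : Real.sqrt ((x - a) ^ (2*p + 1) / (2*p + 1))
        = (x - a) ^ (p + 1/2) * Real.sqrt (1 / (2*p + 1)) := by
      rw [e1, div_eq_mul_one_div, Real.sqrt_mul (sq_nonneg _),
        Real.sqrt_sq (Real.rpow_nonneg hxa.le _)]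
    have hnormh : ‖h x‖ = (x - a) ^ p * ‖f x‖ := by
      rw [hh_def]
      simp only [norm_mul, Complex.norm_real]
      rw [Real.norm_of_nonneg (hw_nonneg x (by linarith))]
    have hb := hbound x hx
    rw [hnormh, hD] at hb
    have hsplit : (x - a) ^ (p + 1/2) = (x - a) ^ p * (x - a) ^ ((1:ℝ)/2) := by
      rw [← Real.rpow_add hxa]
    have hfx : ‖f x‖ ≤ (x - a) ^ ((1:ℝ)/2) * (Real.sqrt (1 / (2*p + 1)) * Real.sqrt (E x)) := by
      have hppos : (0:ℝ) < (x - a) ^ p := Real.rpow_pos_of_pos hxa _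
      refine le_of_mul_le_mul_left ?_ hppos
      calc (x - a) ^ p * ‖f x‖
          ≤ (x - a) ^ (p + 1/2) * Real.sqrt (1 / (2*p + 1)) * Real.sqrt (E x) := hb
        _ = (x - a) ^ p * ((x - a) ^ ((1:ℝ)/2) * (Real.sqrt (1 / (2*p + 1)) * Real.sqrt (E x))) := by
            rw [hsplit]; ring
    rw [norm_div, Complex.norm_real,
      Real.norm_of_nonneg (Real.rpow_nonneg hxa.le _),
      div_le_iff₀ (Real.rpow_pos_of_pos hxa _)]
    calc ‖f x‖ ≤ (x - a) ^ ((1:ℝ)/2) * (Real.sqrt (1 / (2*p + 1)) * Real.sqrt (E x)) := hfx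
      _ = Real.sqrt (1 / (2*p + 1)) * Real.sqrt (E x) * (x - a) ^ ((1:ℝ)/2) := by ring
  -- second limit
  have T2 : Tendsto (fun x => f x / (((x - a) ^ ((1 : ℝ)/2) : ℝ) : ℂ))
      (nhdsWithin a (Ioi a)) (nhds 0) := by
    rw [tendsto_zero_iff_norm_tendsto_zero]
    have hmem : Ioo a b ∈ nhdsWithin a (Ioi a) := Ioo_mem_nhdsGT_of_mem ⟨le_refl a, hab⟩
    refine squeeze_zero' (Eventually.of_forall (fun x => norm_nonneg _))
      (eventually_of_mem hmem (fun x hx => hfb x hx)) ?_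
    have hT : Tendsto (fun x => Real.sqrt (1 / (2*p + 1)) * Real.sqrt (E x))
        (nhdsWithin a (Ioi a)) (nhds (Real.sqrt (1 / (2*p + 1)) * Real.sqrt 0)) :=
      Tendsto.const_mul _ ((Real.continuous_sqrt.tendsto 0).comp hE_lim)
    simpa using hT
  refine ⟨?_, T2⟩
  -- first limit
  have hq0 : (0:ℝ) ≤ p + 1/2 := by linarith
  have h1 : Tendsto (fun x : ℝ => x - a) (nhdsWithin a (Ioi a)) (nhds 0) := by
    have := ((continuous_id.sub (continuous_const (y := a))).tendsto a).mono_left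
      (nhdsWithin_le_nhds (s := Ioi a))
    rw [show (0:ℝ) = a - a by ring]; exact this
  have hcont : Tendsto (fun x : ℝ => (x - a) ^ (p + 1/2))
      (nhdsWithin a (Ioi a)) (nhds ((0:ℝ) ^ (p + 1/2))) :=
    (Real.continuousAt_rpow_const 0 (p + 1/2) (Or.inr hq0)).tendsto.comp h1
  have hprod : Tendsto
      (fun x => (((x - a) ^ (p + 1/2) : ℝ) : ℂ) * (f x / (((x - a) ^ ((1 : ℝ)/2) : ℝ) : ℂ)))
      (nhdsWithin a (Ioi a)) (nhds ((((0:ℝ) ^ (p + 1/2) : ℝ) : ℂ) * 0)) :=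
    (((Complex.continuous_ofReal.tendsto _).comp hcont)).mul T2
  rw [mul_zero] at hprod
  refine Tendsto.congr' ?_ hprod
  filter_upwards [self_mem_nhdsWithin] with x hx
  have hxa : (0:ℝ) < x - a := sub_pos.2 hx
  have hne : (((x - a) ^ ((1 : ℝ)/2) : ℝ) : ℂ) ≠ 0 :=
    Complex.ofReal_ne_zero.2 (ne_of_gt (Real.rpow_pos_of_pos hxa _))
  have e1 : (x - a) ^ (p + 1/2) = (x - a) ^ p * (x - a) ^ ((1:ℝ)/2) := by
    rw [← Real.rpow_add hxa]
  have hhx : h x = ((((x - a) ^ p : ℝ)) : ℂ) * f x := rfl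
  rw [hhx, e1]
  push_cast
  field_simp
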